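/- Let F : ℝ → ℝ be C², μ > 0, d ≥ 2, and define R(H) = F(tr H) + μ|dev(sym H)|², where sym H = (H+Hᵀ)/2 and dev(ε) = ε − (1/d)(tr ε)I. Then for any unit vector n ∈ ℝ^d and any a ∈ ℝ^d, the second directional derivative of R at H along a⊗n equals F''(tr H)(a·n)² + 2μ|sym(a⊗n) − (1/d)(a·n)I|², and the associated acoustic tensor is A(n) = (F''(tr H) + ((d−2)/d)μ) n⊗n + μI, whose determinant is μ^{d−1}·(F''(tr H) + 2(d−1)μ/d). -/

import Mathlib

noncomputable section

def tr {d : ℕ} (M : Fin d → Fin d → ℝ) : ℝ := ∑ i, M i i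
def frobSq {d : ℕ} (M : Fin d → Fin d → ℝ) : ℝ := ∑ i, ∑ j, (M i j)^2
def symPart {d : ℕ} (M : Fin d → Fin d → ℝ) : Fin d → Fin d → ℝ := fun i j => (M i j + M j i)/2

lemma frob_expand {d : ℕ} (P Q : Fin d → Fin d → ℝ) (t : ℝ) :
    frobSq (fun i j => P i j + t * Q i j)
      = frobSq P + (2 * ∑ i, ∑ j, P i j * Q i j) * t + frobSq Q * t^2 := by
  unfold frobSq
  have h : ∀ i j : Fin d, (P i j + t * Q i j)^2
      = P i j^2 + (2 * (P i j * Q i j)) * t + Q i j^2 * t^2 := fun i j => by ring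
  calc ∑ i, ∑ j, (P i j + t * Q i j)^2
      = ∑ i, ∑ j, (P i j^2 + (2 * (P i j * Q i j)) * t + Q i j^2 * t^2) :=
        Finset.sum_congr rfl fun i _ => Finset.sum_congr rfl fun j _ => h i j
    _ = _ := by
        simp only [Finset.sum_add_distrib, ← Finset.sum_mul, ← Finset.mul_sum]

lemma gamma_eval {d : ℕ} (hd : (d:ℝ) ≠ 0) (a nv : Fin d → ℝ) (c : ℝ)
    (hc : c = ∑ i, a i * nv i) (hn : ∑ i, nv i ^ 2 = 1) :
    frobSq (fun i j => (a i * nv j + a j * nv i)/2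
        - (1/(d:ℝ))*c*(if i = j then (1:ℝ) else 0))
      = ((∑ i, (a i)^2) + c^2)/2 - c^2/(d:ℝ) := by
  unfold frobSq
  have h : ∀ i j : Fin d, ((a i * nv j + a j * nv i)/2
        - (1/(d:ℝ))*c*(if i = j then (1:ℝ) else 0))^2
      = (a i)^2 * (nv j)^2/4 + (a j)^2 * (nv i)^2/4 + ((a i * nv i) * (a j * nv j))/2
        + (if i = j then (c^2/(d:ℝ)^2 - (c/(d:ℝ))*(2*(a i * nv i))) else 0) := by
    intro i j
    rcases eq_or_ne i j with h | h
    · subst h; simp only [eq_self_iff_true, if_true]; ring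
    · simp only [if_neg h]; ring
  rw [Finset.sum_congr rfl fun i _ => Finset.sum_congr rfl fun j _ => h i j]
  simp only [Finset.sum_add_distrib]
  have e1 : ∑ i : Fin d, ∑ j, (a i)^2 * (nv j)^2/4 = (∑ i, (a i)^2)/4 := by
    rw [Finset.sum_congr rfl fun i (_ : i ∈ Finset.univ) => by
      rw [← Finset.sum_div, ← Finset.mul_sum, hn, mul_one], ← Finset.sum_div]
  have e2 : ∑ i : Fin d, ∑ j, (a j)^2 * (nv i)^2/4 = (∑ i, (a i)^2)/4 := by
    rw [Finset.sum_comm]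
    rw [Finset.sum_congr rfl fun i (_ : i ∈ Finset.univ) => by
      rw [← Finset.sum_div, ← Finset.mul_sum, hn, mul_one], ← Finset.sum_div]
  have e3 : ∑ i : Fin d, ∑ j, ((a i * nv i) * (a j * nv j))/2 = c^2/2 := by
    rw [Finset.sum_congr rfl fun i (_ : i ∈ Finset.univ) => by
      rw [← Finset.sum_div, ← Finset.mul_sum, ← hc], ← Finset.sum_div, ← Finset.sum_mul, ← hc,
      sq]
  have e4 : ∑ i : Fin d, ∑ j, (if i = j then (c^2/(d:ℝ)^2 - (c/(d:ℝ))*(2*(a i * nv i))) else 0)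
      = (d:ℝ) * (c^2/(d:ℝ)^2) - (c/(d:ℝ))*(2*c) := by
    rw [Finset.sum_congr rfl fun i (_ : i ∈ Finset.univ) => by
      rw [Finset.sum_ite_eq, if_pos (Finset.mem_univ i)]]
    rw [Finset.sum_sub_distrib, Finset.sum_const, ← Finset.mul_sum, ← Finset.mul_sum, ← hc]
    simp [mul_comm]
  rw [e1, e2, e3, e4]
  field_simp
  ring

lemma quadform {d : ℕ} (a nv : Fin d → ℝ) (κ μ : ℝ) :
    ∑ i, ∑ j, ((κ * nv i * nv j + μ * (if i = j then (1:ℝ) else 0)) * a i * a j)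
      = κ * (∑ i, a i * nv i)^2 + μ * ∑ i, (a i)^2 := by
  have h : ∀ i j : Fin d, (κ * nv i * nv j + μ * (if i = j then (1:ℝ) else 0)) * a i * a j
      = κ * ((a i * nv i) * (a j * nv j)) + (if i = j then μ * ((a i)^2) else 0) := by
    intro i j
    rcases eq_or_ne i j with h | h
    · subst h; simp only [eq_self_iff_true, if_true]; ring
    · simp only [if_neg h]; ring
  rw [Finset.sum_congr rfl fun i _ => Finset.sum_congr rfl fun j _ => h i j]
  simp only [Finset.sum_add_distrib]
  congr 1
  · rw [Finset.sum_congr rfl fun i (_ : i ∈ Finset.univ) => by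
      rw [← Finset.mul_sum, ← Finset.mul_sum]]
    rw [← Finset.mul_sum, ← Finset.sum_mul, ← sq]
  · rw [Finset.sum_congr rfl fun i (_ : i ∈ Finset.univ) => by
      rw [Finset.sum_ite_eq, if_pos (Finset.mem_univ i)]]
    rw [Finset.mul_sum]

open Matrix in
lemma det_part {d : ℕ} (hd : 1 ≤ d) (μ κ : ℝ) (hμ : μ ≠ 0) (nv : Fin d → ℝ)
    (hn : ∑ i, nv i ^ 2 = 1) (A : Fin d → Fin d → ℝ)
    (hA : ∀ i j, A i j = κ * nv i * nv j + μ * (if i = j then (1:ℝ) else 0)) :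
    (Matrix.of A).det = μ^(d-1) * (μ + κ) := by
  have hAeq : Matrix.of A
      = μ • (1 + Matrix.replicateCol (Fin 1) ((κ/μ) • nv) * Matrix.replicateRow (Fin 1) nv) := by
    ext i j
    simp only [Matrix.of_apply, hA, Matrix.smul_apply, Matrix.add_apply, Matrix.one_apply,
      Matrix.mul_apply, Matrix.replicateCol_apply, Matrix.replicateRow_apply, Pi.smul_apply, smul_eq_mul,
      Finset.univ_unique, Finset.sum_singleton, mul_ite, mul_one, mul_zero]
    rcases eq_or_ne i j with h | h
    · subst h; simp; field_simp; ring
    · simp [h]; field_simp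
  rw [hAeq, Matrix.det_smul]
  erw [Matrix.det_one_add_replicateCol_mul_replicateRow (ι := Fin 1)]
  have hdp : nv ⬝ᵥ ((κ/μ) • nv) = κ/μ := by
    simp only [dotProduct, Pi.smul_apply, smul_eq_mul]
    rw [Finset.sum_congr rfl fun i (_ : i ∈ Finset.univ) =>
        show nv i * (κ/μ * nv i) = κ/μ * (nv i)^2 by ring,
      ← Finset.mul_sum, hn, mul_one]
  rw [hdp]
  rw [Fintype.card_fin, show d = (d-1)+1 from (Nat.succ_pred_eq_of_pos hd).symm]
  simp only [Nat.add_sub_cancel]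
  rw [pow_succ]
  field_simp

/-- the second directional derivative along a⊗n of
`R(H) = F(tr H) + μ|dev sym H|²`, the associated acoustic tensor
`A(n) = (F''(tr H) + ((d−2)/d)μ) n⊗n + μI`, and its determinant. -/
theorem stmt14 (d : ℕ) (hd : 2 ≤ d) (μ : ℝ) (hμ : 0 < μ)
    (F : ℝ → ℝ) (hF : ContDiff ℝ 2 F)
    (R : (Fin d → Fin d → ℝ) → ℝ)
    (hR : ∀ H, R H = F (tr H) +
      μ * frobSq (fun i j => symPart H i j - (tr H / d) * (if i = j then (1:ℝ) else 0)))
    (H : Fin d → Fin d → ℝ) (nv : Fin d → ℝ) (hn : ∑ i, nv i ^ 2 = 1)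
    (a : Fin d → ℝ)
    (A : Fin d → Fin d → ℝ)
    (hA : ∀ i j, A i j = (deriv (deriv F) (tr H) + (((d:ℝ)-2)/d)*μ) * nv i * nv j
      + μ * (if i = j then (1:ℝ) else 0)) :
    (iteratedDeriv 2 (fun t : ℝ => R (fun i j => H i j + t * a i * nv j)) 0
      = deriv (deriv F) (tr H) * (∑ i, a i * nv i)^2
        + 2*μ * frobSq (fun i j =>
            (a i * nv j + a j * nv i)/2 - (1/(d:ℝ))*(∑ k, a k * nv k) * (if i = j then (1:ℝ) else 0)))
    ∧ (∑ i, ∑ j, A i j * a i * a j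
        = iteratedDeriv 2 (fun t : ℝ => R (fun i j => H i j + t * a i * nv j)) 0)
    ∧ (Matrix.of A).det = μ^(d-1) * (deriv (deriv F) (tr H) + 2*((d:ℝ)-1)*μ/d) := by
  classical
  have hd0 : (d:ℝ) ≠ 0 := by positivity
  set c : ℝ := ∑ i, a i * nv i with hc
  set F'' : ℝ := deriv (deriv F) (tr H) with hF''
  set P : Fin d → Fin d → ℝ :=
    fun i j => symPart H i j - (tr H / d) * (if i = j then (1:ℝ) else 0) with hP
  set Q : Fin d → Fin d → ℝ := fun i j =>
      (a i * nv j + a j * nv i)/2 - (1/(d:ℝ))*c * (if i = j then (1:ℝ) else 0) with hQ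
  set α : ℝ := frobSq P with hα
  set β : ℝ := 2 * ∑ i, ∑ j, P i j * Q i j with hβ
  set γ : ℝ := frobSq Q with hγ
  have htr : ∀ t : ℝ, tr (fun i j => H i j + t * a i * nv j) = tr H + c * t := by
    intro t
    simp only [tr, Finset.sum_add_distrib]
    rw [hc, Finset.sum_mul]
    congr 1
    exact Finset.sum_congr rfl fun i _ => by ring
  have hfun : (fun t : ℝ => R (fun i j => H i j + t * a i * nv j))
      = fun t : ℝ => F (tr H + c * t) + ((μ*α) + (μ*β)*t + (μ*γ)*t^2) := by
    funext t
    rw [hR, htr]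
    congr 1
    have hentry : (fun i j => symPart (fun i j => H i j + t * a i * nv j) i j
        - ((tr H + c * t) / d) * (if i = j then (1:ℝ) else 0))
        = fun i j => P i j + t * Q i j := by
      funext i j
      simp only [symPart, hP, hQ]
      ring
    rw [hentry, frob_expand, hα, hβ, hγ]
    ring
  have hFd : Differentiable ℝ F := hF.differentiable two_ne_zero
  have hF'd : Differentiable ℝ (deriv F) := by
    have h2 : ContDiff ℝ ((1:ℕ)+1) F := by norm_num [hF]
    exact ((contDiff_succ_iff_deriv.mp h2).2.2).differentiable one_ne_zero
  have hin : ∀ t : ℝ, HasDerivAt (fun t : ℝ => tr H + c * t) c t := by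
    intro t
    simpa using ((hasDerivAt_id t).const_mul c).const_add (tr H)
  have hg : ∀ t : ℝ, HasDerivAt (fun t : ℝ => F (tr H + c * t) + ((μ*α) + (μ*β)*t + (μ*γ)*t^2))
      (deriv F (tr H + c * t) * c + ((μ*β) + 2*(μ*γ)*t)) t := by
    intro t
    have h1 : HasDerivAt (fun t : ℝ => F (tr H + c * t)) (deriv F (tr H + c * t) * c) t :=
      (hFd.differentiableAt.hasDerivAt).comp t (hin t)
    have h2 : HasDerivAt (fun t : ℝ => (μ*α) + (μ*β)*t + (μ*γ)*t^2) ((μ*β) + 2*(μ*γ)*t) t := by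
      have := (((hasDerivAt_id t).const_mul (μ*β)).const_add (μ*α)).add
        ((hasDerivAt_pow 2 t).const_mul (μ*γ))
      convert this using 1
      · rfl
      · rfl
      · rfl
      push_cast
      ring
    exact h1.add h2
  have hderiv1 : deriv (fun t : ℝ => F (tr H + c * t) + ((μ*α) + (μ*β)*t + (μ*γ)*t^2))
      = fun t : ℝ => deriv F (tr H + c * t) * c + ((μ*β) + 2*(μ*γ)*t) := by
    funext t; exact (hg t).deriv
  have hg2 : HasDerivAt (fun t : ℝ => deriv F (tr H + c * t) * c + ((μ*β) + 2*(μ*γ)*t))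
      ((deriv (deriv F) (tr H + c * 0) * c) * c + 2*(μ*γ)) 0 := by
    have h1 : HasDerivAt (fun t : ℝ => deriv F (tr H + c * t))
        (deriv (deriv F) (tr H + c * 0) * c) 0 :=
      (hF'd.differentiableAt.hasDerivAt).comp 0 (hin 0)
    have h2 : HasDerivAt (fun t : ℝ => (μ*β) + 2*(μ*γ)*t) (2*(μ*γ)) 0 := by
      simpa using ((hasDerivAt_id (0:ℝ)).const_mul (2*(μ*γ))).const_add (μ*β)
    exact (h1.mul_const c).add h2
  have key1 : iteratedDeriv 2 (fun t : ℝ => R (fun i j => H i j + t * a i * nv j)) 0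
      = F'' * c^2 + 2*μ*γ := by
    rw [hfun]
    rw [show (2:ℕ) = 1 + 1 from rfl, iteratedDeriv_succ, iteratedDeriv_one, hderiv1]
    rw [hg2.deriv]
    simp only [mul_zero, add_zero, hF'']
    ring
  have hgam : γ = ((∑ i, (a i)^2) + c^2)/2 - c^2/(d:ℝ) := by
    rw [hγ, hQ]
    exact gamma_eval hd0 a nv c hc hn
  refine ⟨key1, ?_, ?_⟩
  · rw [key1]
    have : ∑ i, ∑ j, A i j * a i * a j
        = (F'' + (((d:ℝ)-2)/d)*μ) * (∑ i, a i * nv i)^2 + μ * ∑ i, (a i)^2 := by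
      rw [← quadform a nv (F'' + (((d:ℝ)-2)/d)*μ) μ]
      exact Finset.sum_congr rfl fun i _ => Finset.sum_congr rfl fun j _ => by rw [hA]
    rw [this, ← hc, hgam]
    field_simp
    ring
  · rw [det_part (le_trans one_le_two hd) μ (F'' + (((d:ℝ)-2)/d)*μ) hμ.ne' nv hn A hA]
    congr 1
    field_simp
    ring
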